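/- Let L be an N×N complex matrix with no eigenvalues on the imaginary axis. Then half the signature of L equals ∫_{-∞}^{∞} (1/(2π(1+s²))) Tr((1 + i s L)(L + i s·1)^{-1}) ds, and this integral converges absolutely. -/

import Mathlib

open MeasureTheory Polynomial Matrix Complex Filter Topology

/-- Total algebraic multiplicity of eigenvalues of `L` with positive real part. -/
noncomputable def posEigMult {N : ℕ} (L : Matrix (Fin N) (Fin N) ℂ) : ℕ :=
  @Multiset.countP ℂ (fun z => 0 < z.re) (Classical.decPred _) (Matrix.charpoly L).roots

/-- Total algebraic multiplicity of eigenvalues of `L` with negative real part. -/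
noncomputable def negEigMult {N : ℕ} (L : Matrix (Fin N) (Fin N) ℂ) : ℕ :=
  @Multiset.countP ℂ (fun z => z.re < 0) (Classical.decPred _) (Matrix.charpoly L).roots


variable {N : ℕ}

lemma eval_charpoly' (M : Matrix (Fin N) (Fin N) ℂ) (x : ℂ) :
    (M.charpoly).eval x = (x • (1 : Matrix (Fin N) (Fin N) ℂ) - M).det := by
  rw [Matrix.charpoly, ← Polynomial.coe_evalRingHom, RingHom.map_det]
  congr 1
  ext i j
  by_cases h : i = j <;>
    simp [Matrix.charmatrix_apply, h, Matrix.one_apply, Matrix.sub_apply, Matrix.smul_apply,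
      Matrix.diagonal_apply]

lemma card_roots_charpoly (L : Matrix (Fin N) (Fin N) ℂ) :
    (Matrix.charpoly L).roots.card = N := by
  have h := Polynomial.splits_iff_card_roots.mp
    (IsAlgClosed.splits (Matrix.charpoly L))
  rw [h, Matrix.charpoly_natDegree_eq_dim L, Fintype.card_fin]

lemma det_add_smul_one (L : Matrix (Fin N) (Fin N) ℂ) (c : ℂ) :
    (L + c • (1 : Matrix (Fin N) (Fin N) ℂ)).det
      = ((Matrix.charpoly L).roots.map (fun l => l + c)).prod := by
  have hrepr : Matrix.charpoly L
      = ((Matrix.charpoly L).roots.map fun a => X - C a).prod :=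
    ((IsAlgClosed.splits _).eq_prod_roots_of_monic (Matrix.charpoly_monic L))
  have h1 : L + c • (1 : Matrix (Fin N) (Fin N) ℂ)
      = -((-c) • (1 : Matrix (Fin N) (Fin N) ℂ) - L) := by
    rw [neg_sub, neg_smul]; abel
  have h2 : ((-c) • (1 : Matrix (Fin N) (Fin N) ℂ) - L).det
      = ((Matrix.charpoly L).roots.map (fun a => -c - a)).prod := by
    rw [← eval_charpoly', hrepr, Polynomial.roots_multiset_prod_X_sub_C]
    rw [Polynomial.eval_multiset_prod, Multiset.map_map]
    congr 1
    apply Multiset.map_congr rfl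
    intro a _
    simp
  rw [h1, Matrix.det_neg, h2, Fintype.card_fin]
  have h3 : ((Matrix.charpoly L).roots.map (fun a => -c - a))
      = ((Matrix.charpoly L).roots.map (fun a => (-1) * (a + c))) := by
    apply Multiset.map_congr rfl; intro a _; ring
  rw [h3, show (fun a : ℂ => (-1) * (a + c)) = fun a => ((fun _ : ℂ => (-1:ℂ)) a) * ((fun a : ℂ => a + c) a) from rfl,
    Multiset.prod_map_mul]
  have h4 : ((Matrix.charpoly L).roots.map (fun _ : ℂ => (-1:ℂ))).prod = (-1 : ℂ) ^ N := by
    rw [Multiset.map_const', Multiset.prod_replicate, card_roots_charpoly]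
  rw [h4, ← mul_assoc, ← pow_add, Even.neg_one_pow (⟨N, rfl⟩ : Even (N + N)), one_mul]

lemma det_smul_add_smul_one (L : Matrix (Fin N) (Fin N) ℂ) (a b : ℂ) :
    (a • L + b • (1 : Matrix (Fin N) (Fin N) ℂ)).det
      = ((Matrix.charpoly L).roots.map (fun l => a * l + b)).prod := by
  rcases eq_or_ne a 0 with rfl | ha
  · simp only [zero_smul, zero_add, zero_mul]
    rw [Matrix.det_smul, Matrix.det_one, Fintype.card_fin, mul_one]
    rw [Multiset.map_const', Multiset.prod_replicate, card_roots_charpoly]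
  · have h1 : a • L + b • (1 : Matrix (Fin N) (Fin N) ℂ)
        = a • (L + (a⁻¹ * b) • (1 : Matrix (Fin N) (Fin N) ℂ)) := by
      rw [smul_add, smul_smul, mul_inv_cancel_left₀ ha]
    rw [h1, Matrix.det_smul, Fintype.card_fin, det_add_smul_one]
    rw [show a ^ N = ((Matrix.charpoly L).roots.map (fun _ : ℂ => a)).prod from by
      rw [Multiset.map_const', Multiset.prod_replicate, card_roots_charpoly],
      ← Multiset.prod_map_mul]
    apply congrArg
    apply Multiset.map_congr rfl
    intro l _
    field_simp

lemma trace_formula (L : Matrix (Fin N) (Fin N) ℂ) (z : ℂ)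
    (hz : ∀ l ∈ (Matrix.charpoly L).roots, l + z ≠ 0) :
    Matrix.trace ((1 + z • L) * (L + z • (1 : Matrix (Fin N) (Fin N) ℂ))⁻¹)
      = ((Matrix.charpoly L).roots.map (fun l => (1 + z * l) * (l + z)⁻¹)).sum := by
  have hdet : (L + z • (1 : Matrix (Fin N) (Fin N) ℂ)).det
      = ((Matrix.charpoly L).roots.map (fun l => l + z)).prod := det_add_smul_one L z
  have hd0 : (L + z • (1 : Matrix (Fin N) (Fin N) ℂ)).det ≠ 0 := by
    rw [hdet]
    apply Multiset.prod_ne_zero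
    intro h0
    obtain ⟨l, hl, hl0⟩ := Multiset.mem_map.mp h0
    exact hz l hl hl0
  set M := (1 + z • L) * (L + z • (1 : Matrix (Fin N) (Fin N) ℂ))⁻¹ with hM
  set P := ((Matrix.charpoly L).roots.map
      (fun l => X - C ((1 + z * l) * (l + z)⁻¹))).prod with hP
  have hcp : Matrix.charpoly M = P := by
    apply Polynomial.funext
    intro x
    rw [eval_charpoly']
    have key : (x • (1 : Matrix (Fin N) (Fin N) ℂ) - M) * (L + z • 1)
        = (x - z) • L + (x * z - 1) • (1 : Matrix (Fin N) (Fin N) ℂ) := by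
      rw [Matrix.sub_mul, hM, Matrix.mul_assoc,
        Matrix.nonsing_inv_mul _ (Ne.isUnit hd0), Matrix.mul_one, Matrix.smul_mul,
        Matrix.one_mul]
      rw [smul_add, smul_smul]
      module
    have hdets : (x • (1 : Matrix (Fin N) (Fin N) ℂ) - M).det
          * (L + z • (1 : Matrix (Fin N) (Fin N) ℂ)).det
        = ((Matrix.charpoly L).roots.map (fun l => (x - z) * l + (x * z - 1))).prod := by
      rw [← Matrix.det_mul, key, det_smul_add_smul_one]
    have hsplit : ((Matrix.charpoly L).roots.map (fun l => (x - z) * l + (x * z - 1))).prod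
        = ((Matrix.charpoly L).roots.map (fun l => l + z)).prod * P.eval x := by
      rw [hP, Polynomial.eval_multiset_prod, Multiset.map_map, ← Multiset.prod_map_mul]
      apply congrArg
      apply Multiset.map_congr rfl
      intro l hl
      have h1 : (l + z) * ((1 + z * l) * (l + z)⁻¹) = 1 + z * l := by
        rw [mul_comm (1 + z * l), ← mul_assoc, mul_inv_cancel₀ (hz l hl), one_mul]
      simp only [Function.comp, Polynomial.eval_sub, Polynomial.eval_X, Polynomial.eval_C]
      rw [mul_sub, h1]
      ring
    have := hdets.trans (by rw [hsplit, ← hdet])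
    exact mul_right_cancel₀ hd0 (this.trans (mul_comm _ _))
  rw [Matrix.trace_eq_sum_roots_charpoly, hcp, hP,
    show (Multiset.map (fun l => X - C ((1 + z * l) * (l + z)⁻¹)) (Matrix.charpoly L).roots)
        = Multiset.map (fun a => X - C a)
            (Multiset.map (fun l => (1 + z * l) * (l + z)⁻¹) (Matrix.charpoly L).roots) from
      by rw [Multiset.map_map]; rfl,
    Polynomial.roots_multiset_prod_X_sub_C]

noncomputable def gfun (l : ℂ) (s : ℝ) : ℂ :=
  (1 / (2 * (Real.pi : ℂ) * (1 + (s : ℂ) ^ 2))) *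
    ((1 + ((s : ℂ) * Complex.I) * l) * (l + (s : ℂ) * Complex.I)⁻¹)

lemma one_add_sq_ne (s : ℝ) : (1 : ℂ) + (s : ℂ) ^ 2 ≠ 0 := by
  have h : (1 : ℂ) + (s : ℂ) ^ 2 = ((1 + s ^ 2 : ℝ) : ℂ) := by push_cast; ring
  rw [h]
  exact_mod_cast ne_of_gt (by positivity : (0:ℝ) < 1 + s ^ 2)

lemma den2_ne {l : ℂ} (hl : l.re ≠ 0) (s : ℝ) : l + (s : ℂ) * Complex.I ≠ 0 := by
  intro h
  apply hl
  have := congrArg Complex.re h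
  simpa using this

lemma cfac_ne (s : ℝ) : 2 * (Real.pi : ℂ) * (1 + (s : ℂ) ^ 2) ≠ 0 := by
  refine mul_ne_zero (mul_ne_zero two_ne_zero ?_) (one_add_sq_ne s)
  exact_mod_cast Real.pi_ne_zero

lemma gfun_continuous {l : ℂ} (hl : l.re ≠ 0) : Continuous (gfun l) := by
  apply Continuous.mul
  · apply Continuous.div continuous_const
    · continuity
    · exact cfac_ne
  · apply Continuous.mul
    · continuity
    · apply Continuous.inv₀
      · continuity
      · exact den2_ne hl

lemma norm_h_le {l : ℂ} (hl : l.re ≠ 0) (s : ℝ) :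
    ‖(1 + ((s : ℂ) * Complex.I) * l) * (l + (s : ℂ) * Complex.I)⁻¹‖
      ≤ max ((1 + (2 * ‖l‖ + 2) * ‖l‖) / |l.re|) (1 + 2 * ‖l‖) := by
  set C := max ((1 + (2 * ‖l‖ + 2) * ‖l‖) / |l.re|) (1 + 2 * ‖l‖) with hC
  have ha : 0 < |l.re| := abs_pos.mpr hl
  have hd0 : l + (s : ℂ) * Complex.I ≠ 0 := den2_ne hl s
  have hdpos : 0 < ‖l + (s : ℂ) * Complex.I‖ := norm_pos_iff.mpr hd0
  have hnum : ‖1 + ((s : ℂ) * Complex.I) * l‖ ≤ 1 + |s| * ‖l‖ := by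
    calc ‖1 + ((s : ℂ) * Complex.I) * l‖ ≤ ‖(1:ℂ)‖ + ‖((s : ℂ) * Complex.I) * l‖ :=
          norm_add_le _ _
    _ = 1 + |s| * ‖l‖ := by simp [norm_mul, Complex.norm_real]
  have hb1 : |l.re| ≤ ‖l + (s : ℂ) * Complex.I‖ := by
    have h := Complex.abs_re_le_norm (l + (s : ℂ) * Complex.I)
    simpa using h
  have hb2 : |s| - ‖l‖ ≤ ‖l + (s : ℂ) * Complex.I‖ := by
    have h : ‖(l + (s : ℂ) * Complex.I) - l‖ ≤ ‖l + (s : ℂ) * Complex.I‖ + ‖l‖ :=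
      norm_sub_le _ _
    have h2 : ‖(l + (s : ℂ) * Complex.I) - l‖ = |s| := by
      simp [norm_mul, Complex.norm_real]
    linarith
  rw [norm_mul, norm_inv, ← div_eq_mul_inv, div_le_iff₀ hdpos]
  rcases le_or_gt |s| (2 * ‖l‖ + 2) with hs | hs
  · have hC1 : (1 + (2 * ‖l‖ + 2) * ‖l‖) / |l.re| ≤ C := le_max_left _ _
    have hl0 : (0:ℝ) ≤ ‖l‖ := norm_nonneg l
    have hs0 : (0:ℝ) ≤ |s| := abs_nonneg s
    have key : 1 + |s| * ‖l‖ ≤ ((1 + (2 * ‖l‖ + 2) * ‖l‖) / |l.re|) * |l.re| := by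
      rw [div_mul_cancel₀ _ (ne_of_gt ha)]
      nlinarith
    calc ‖1 + ((s : ℂ) * Complex.I) * l‖ ≤ 1 + |s| * ‖l‖ := hnum
    _ ≤ ((1 + (2 * ‖l‖ + 2) * ‖l‖) / |l.re|) * |l.re| := key
    _ ≤ C * ‖l + (s : ℂ) * Complex.I‖ := by
        apply mul_le_mul hC1 hb1 (le_of_lt ha)
        have : (0:ℝ) < 1 + 2 * ‖l‖ := by positivity
        exact le_trans (le_of_lt this) (le_max_right _ _)
  · have hC2 : (1 + 2 * ‖l‖) ≤ C := le_max_right _ _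
    have hl0 : (0:ℝ) ≤ ‖l‖ := norm_nonneg l
    have key : 1 + |s| * ‖l‖ ≤ (1 + 2 * ‖l‖) * (|s| - ‖l‖) := by nlinarith
    calc ‖1 + ((s : ℂ) * Complex.I) * l‖ ≤ 1 + |s| * ‖l‖ := hnum
    _ ≤ (1 + 2 * ‖l‖) * (|s| - ‖l‖) := key
    _ ≤ C * ‖l + (s : ℂ) * Complex.I‖ := by
        apply mul_le_mul hC2 hb2 (by nlinarith) (le_trans (by positivity) hC2)

lemma gfun_integrable {l : ℂ} (hl : l.re ≠ 0) : Integrable (gfun l) := by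
  set C := max ((1 + (2 * ‖l‖ + 2) * ‖l‖) / |l.re|) (1 + 2 * ‖l‖) with hC
  have hCpos : (0:ℝ) < C := lt_of_lt_of_le (by positivity) (le_max_right _ _)
  apply Integrable.mono' (integrable_inv_one_add_sq.const_mul (C / (2 * Real.pi)))
    (gfun_continuous hl).aestronglyMeasurable
  filter_upwards with s
  have h1 : ‖(1 : ℂ) / (2 * (Real.pi : ℂ) * (1 + (s : ℂ) ^ 2))‖
      = 1 / (2 * Real.pi * (1 + s ^ 2)) := by
    have h : 2 * (Real.pi : ℂ) * (1 + (s : ℂ) ^ 2)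
        = ((2 * Real.pi * (1 + s ^ 2) : ℝ) : ℂ) := by push_cast; ring
    rw [norm_div, h, Complex.norm_real, norm_one, Real.norm_eq_abs,
      abs_of_pos (by positivity)]
  rw [gfun, norm_mul, h1]
  have h2 := norm_h_le hl s
  calc 1 / (2 * Real.pi * (1 + s ^ 2)) *
        ‖(1 + ((s : ℂ) * Complex.I) * l) * (l + (s : ℂ) * Complex.I)⁻¹‖
      ≤ 1 / (2 * Real.pi * (1 + s ^ 2)) * C := by
        apply mul_le_mul_of_nonneg_left h2 (by positivity)
  _ = C / (2 * Real.pi) * (1 + s ^ 2)⁻¹ := by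
        field_simp


noncomputable def Ffun (l : ℂ) (s : ℝ) : ℂ :=
  (1 / (2 * (Real.pi : ℂ))) *
    ((Complex.I / 2) * ((Real.log (1 + s ^ 2) : ℝ) : ℂ)
      - Complex.I * Complex.log ((s : ℂ) - Complex.I * l))

lemma shift_ne {l : ℂ} (hl : l.re ≠ 0) (s : ℝ) : (s : ℂ) - Complex.I * l ≠ 0 := by
  intro h
  apply hl
  have := congrArg Complex.im h
  simpa using this

lemma shift_mem {l : ℂ} (hl : l.re ≠ 0) (s : ℝ) :
    (s : ℂ) - Complex.I * l ∈ Complex.slitPlane := by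
  rw [Complex.mem_slitPlane_iff]
  right
  simpa using hl

lemma hasDerivAt_Ffun {l : ℂ} (hl : l.re ≠ 0) (s : ℝ) :
    HasDerivAt (Ffun l) (gfun l s) s := by
  have hpos : (0:ℝ) < 1 + s ^ 2 := by positivity
  have h1 : HasDerivAt (fun t : ℝ => ((Real.log (1 + t ^ 2) : ℝ) : ℂ))
      (((1 + s ^ 2)⁻¹ * (2 * s) : ℝ) : ℂ) s := by
    have hin : HasDerivAt (fun t : ℝ => 1 + t ^ 2) (2 * s) s := by
      simpa using (hasDerivAt_pow 2 s).const_add 1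
    exact ((Real.hasDerivAt_log (ne_of_gt hpos)).comp s hin).ofReal_comp
  have h2 : HasDerivAt (fun t : ℝ => Complex.log ((t : ℂ) - Complex.I * l))
      (((s : ℂ) - Complex.I * l)⁻¹) s := by
    have hout : HasDerivAt (fun z : ℂ => Complex.log (z - Complex.I * l))
        (((s : ℂ) - Complex.I * l)⁻¹ * 1) (s : ℂ) :=
      by simpa using ((hasDerivAt_id (s:ℂ)).sub_const (Complex.I * l)).clog (shift_mem hl s)
    simpa using hout.comp_ofReal
  have hD := ((h1.const_mul (Complex.I / 2)).sub (h2.const_mul Complex.I)).const_mul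
      (1 / (2 * (Real.pi : ℂ)))
  convert hD using 1
  · rfl
  · rfl
  rw [gfun]
  have hne1 : (1 : ℂ) + (s : ℂ) ^ 2 ≠ 0 := by
    have h : (1 : ℂ) + (s : ℂ) ^ 2 = ((1 + s ^ 2 : ℝ) : ℂ) := by push_cast; ring
    rw [h]; exact_mod_cast ne_of_gt hpos
  have hne2 : l + (s : ℂ) * Complex.I ≠ 0 := by
    intro h; apply hl; have := congrArg Complex.re h; simpa using this
  have hne3 : (s : ℂ) - Complex.I * l ≠ 0 := shift_ne hl s
  have hpi : (Real.pi : ℂ) ≠ 0 := by exact_mod_cast Real.pi_ne_zero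
  push_cast
  field_simp
  ring_nf
  simp only [Complex.I_sq, show Complex.I ^ 3 = -Complex.I from by
    rw [pow_succ, Complex.I_sq]; ring]
  ring

lemma tendsto_log_ratio {l : ℂ} (hl : l.re ≠ 0) :
    Tendsto (fun R : ℝ => Complex.log ((R : ℂ) - Complex.I * l)
        - Complex.log (((-R : ℝ) : ℂ) - Complex.I * l)) atTop
      (𝓝 ((if 0 < l.re then 1 else -1) * (Real.pi : ℂ) * Complex.I)) := by
  have tend0 : Tendsto (fun R : ℝ => Complex.I * l / (R : ℂ)) atTop (𝓝 0) := by
    have h1 : Tendsto (fun R : ℝ => ((R⁻¹ : ℝ) : ℂ)) atTop (𝓝 ((0:ℝ):ℂ)) :=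
      (Complex.continuous_ofReal.tendsto 0).comp tendsto_inv_atTop_zero
    have h2 := h1.const_mul (Complex.I * l)
    simp only [Complex.ofReal_zero, mul_zero] at h2
    refine h2.congr fun R => ?_
    rw [div_eq_mul_inv, ← Complex.ofReal_inv]
  have hw1 : Tendsto (fun R : ℝ => 1 - Complex.I * l / (R : ℂ)) atTop (𝓝 1) := by
    simpa using (tendsto_const_nhds (x := (1:ℂ))).sub tend0
  have hw2 : Tendsto (fun R : ℝ => -1 - Complex.I * l / (R : ℂ)) atTop (𝓝 (-1)) := by
    simpa using (tendsto_const_nhds (x := (-1:ℂ))).sub tend0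
  have him : ∀ R : ℝ, 0 < R → ∀ c : ℂ, (c - Complex.I * l / (R : ℂ)).im
      = c.im - l.re / R := by
    intro R hR c
    simp [Complex.div_im, Complex.ofReal_re, Complex.ofReal_im]
    field_simp
  have hlog1 : Tendsto (fun R : ℝ => Complex.log (1 - Complex.I * l / (R : ℂ))) atTop
      (𝓝 0) := by
    have hcont : ContinuousAt Complex.log 1 :=
      continuousAt_clog (by simp [Complex.mem_slitPlane_iff])
    have := hcont.tendsto.comp hw1
    simpa [Complex.log_one, Function.comp_def] using this
  have habs : (↑(Real.log ‖(-1 : ℂ)‖) : ℂ) = 0 := by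
    have : ‖(-1 : ℂ)‖ = 1 := by
      rw [show (-1 : ℂ) = -(1:ℂ) from rfl, norm_neg, norm_one]
    rw [this, Real.log_one, Complex.ofReal_zero]
  have hlog2 : Tendsto (fun R : ℝ => Complex.log (-1 - Complex.I * l / (R : ℂ))) atTop
      (𝓝 (-(if 0 < l.re then 1 else -1) * (Real.pi : ℂ) * Complex.I)) := by
    rcases hl.lt_or_gt with hneg | hpos
    · have hlim := Complex.tendsto_log_nhdsWithin_im_nonneg_of_re_neg_of_im_zero
        (z := (-1 : ℂ)) (by norm_num) (by norm_num)
      have hpath : Tendsto (fun R : ℝ => -1 - Complex.I * l / (R : ℂ)) atTop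
          (𝓝[{z : ℂ | 0 ≤ z.im}] (-1)) := by
        apply tendsto_nhdsWithin_of_tendsto_nhds_of_eventually_within _ hw2
        filter_upwards [eventually_gt_atTop (0:ℝ)] with R hR
        have hlt : l.re / R < 0 := div_neg_of_neg_of_pos hneg hR
        simp only [Set.mem_setOf_eq, him R hR (-1)]
        norm_num
        linarith
      have h := hlim.comp hpath
      rw [habs, zero_add] at h
      rw [if_neg (not_lt.mpr (le_of_lt hneg))]
      simpa [Function.comp_def] using h
    · have hlim := Complex.tendsto_log_nhdsWithin_im_neg_of_re_neg_of_im_zero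
        (z := (-1 : ℂ)) (by norm_num) (by norm_num)
      have hpath : Tendsto (fun R : ℝ => -1 - Complex.I * l / (R : ℂ)) atTop
          (𝓝[{z : ℂ | z.im < 0}] (-1)) := by
        apply tendsto_nhdsWithin_of_tendsto_nhds_of_eventually_within _ hw2
        filter_upwards [eventually_gt_atTop (0:ℝ)] with R hR
        have hlt : 0 < l.re / R := div_pos hpos hR
        simp only [Set.mem_setOf_eq, him R hR (-1)]
        norm_num
        linarith
      have h := hlim.comp hpath
      rw [habs, zero_sub] at h
      rw [if_pos hpos]
      simpa [Function.comp_def] using h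
  have heq : ∀ᶠ R : ℝ in atTop,
      Complex.log ((R : ℂ) - Complex.I * l) - Complex.log (((-R : ℝ) : ℂ) - Complex.I * l)
        = Complex.log (1 - Complex.I * l / (R : ℂ))
          - Complex.log (-1 - Complex.I * l / (R : ℂ)) := by
    filter_upwards [eventually_gt_atTop (0:ℝ)] with R hR
    have hR0 : ((R : ℝ) : ℂ) ≠ 0 := by exact_mod_cast ne_of_gt hR
    have hx : ∀ c : ℂ, c.im = 0 → c - Complex.I * l / (R : ℂ) ≠ 0 := by
      intro c hc h
      apply hl
      have h2 := congrArg Complex.im h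
      rw [him R hR c, hc, Complex.zero_im, zero_sub, neg_eq_zero] at h2
      rcases div_eq_zero_iff.mp h2 with h3 | h3
      · exact h3
      · exact absurd h3 (ne_of_gt hR)
    have hx1 : (1 : ℂ) - Complex.I * l / (R : ℂ) ≠ 0 := hx 1 rfl
    have hx2 : (-1 : ℂ) - Complex.I * l / (R : ℂ) ≠ 0 := hx (-1) (by simp)
    have e1 : (R : ℂ) - Complex.I * l = (R : ℝ) * (1 - Complex.I * l / (R : ℂ)) := by
      field_simp
    have e2 : ((-R : ℝ) : ℂ) - Complex.I * l
        = (R : ℝ) * (-1 - Complex.I * l / (R : ℂ)) := by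
      push_cast
      field_simp
    rw [e1, e2, Complex.log_ofReal_mul hR hx1, Complex.log_ofReal_mul hR hx2]
    ring
  have hfin := hlog1.sub hlog2
  rw [show (0 : ℂ) - (-(if 0 < l.re then 1 else -1) * (Real.pi : ℂ) * Complex.I)
      = (if 0 < l.re then 1 else -1) * (Real.pi : ℂ) * Complex.I from by ring] at hfin
  exact Filter.Tendsto.congr' (heq.mono fun R h => h.symm) hfin

lemma gfun_integral {l : ℂ} (hl : l.re ≠ 0) (hint : Integrable (gfun l)) :
    ∫ s : ℝ, gfun l s = (if 0 < l.re then 1 else -1) / 2 := by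
  have h1 : Tendsto (fun R : ℝ => ∫ s in (-R)..R, gfun l s) atTop
      (𝓝 (∫ s : ℝ, gfun l s)) :=
    intervalIntegral_tendsto_integral hint tendsto_neg_atTop_atBot tendsto_id
  have h2 : ∀ R : ℝ, ∫ s in (-R)..R, gfun l s = Ffun l R - Ffun l (-R) := fun R =>
    intervalIntegral.integral_eq_sub_of_hasDerivAt (fun x _ => hasDerivAt_Ffun hl x)
      hint.intervalIntegrable
  have h3 : ∀ R : ℝ, Ffun l R - Ffun l (-R)
      = (-Complex.I / (2 * (Real.pi : ℂ))) *
        (Complex.log ((R : ℂ) - Complex.I * l)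
          - Complex.log (((-R : ℝ) : ℂ) - Complex.I * l)) := by
    intro R
    rw [Ffun, Ffun, neg_sq]
    push_cast
    ring
  have h4 : Tendsto (fun R : ℝ => Ffun l R - Ffun l (-R)) atTop
      (𝓝 ((if 0 < l.re then 1 else -1) / 2)) := by
    have := (tendsto_log_ratio hl).const_mul (-Complex.I / (2 * (Real.pi : ℂ)))
    have hval : ∀ c : ℂ, (-Complex.I / (2 * (Real.pi : ℂ))) * (c * (Real.pi : ℂ) * Complex.I)
        = c / 2 := by
      intro c
      have hpi : (Real.pi : ℂ) ≠ 0 := by exact_mod_cast Real.pi_ne_zero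
      have hii : (-Complex.I) * (c * (Real.pi : ℂ) * Complex.I) = c * (Real.pi : ℂ) := by
        rw [show (-Complex.I) * (c * (Real.pi : ℂ) * Complex.I)
            = c * (Real.pi : ℂ) * (-(Complex.I * Complex.I)) from by ring, Complex.I_mul_I]
        ring
      rw [div_mul_eq_mul_div, hii]
      field_simp
    rw [hval _] at this
    exact Tendsto.congr (fun R => (h3 R).symm) this
  exact tendsto_nhds_unique (h1.congr h2) h4

lemma multiset_integrable_sum (m : Multiset ℂ) (G : ℂ → ℝ → ℂ)
    (h : ∀ l ∈ m, Integrable (G l)) :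
    Integrable (fun s => (m.map (fun l => G l s)).sum) ∧
    ∫ s : ℝ, (m.map (fun l => G l s)).sum = (m.map (fun l => ∫ s : ℝ, G l s)).sum := by
  induction m using Multiset.induction_on with
  | empty =>
    constructor
    · simpa using (integrable_zero ℝ ℂ (volume : Measure ℝ))
    · simp
  | cons a t ih =>
    have ha := h a (Multiset.mem_cons_self a t)
    obtain ⟨ht1, ht2⟩ := ih (fun l hl => h l (Multiset.mem_cons_of_mem hl))
    constructor
    · simpa only [Multiset.map_cons, Multiset.sum_cons, Pi.add_def] using ha.add ht1
    · simp only [Multiset.map_cons, Multiset.sum_cons]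
      rw [integral_add ha ht1, ht2]

lemma count_sum (m : Multiset ℂ) (h : ∀ z ∈ m, z.re ≠ 0) :
    (m.map (fun l => (if 0 < l.re then (1:ℂ) else -1) / 2)).sum
      = ((((@Multiset.countP ℂ (fun z => 0 < z.re) (Classical.decPred _) m : ℤ)
          - (@Multiset.countP ℂ (fun z => z.re < 0) (Classical.decPred _) m : ℤ) : ℤ)) : ℂ)
          / 2 := by
  induction m using Multiset.induction_on with
  | empty => simp
  | cons a t ih =>
    have ha := h a (Multiset.mem_cons_self a t)
    have ih' := ih (fun l hl => h l (Multiset.mem_cons_of_mem hl))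
    simp only [Multiset.map_cons, Multiset.sum_cons, Multiset.countP_cons, ih']
    rcases ha.lt_or_gt with hneg | hpos
    · rw [if_neg (not_lt.mpr (le_of_lt hneg)), if_neg (not_lt.mpr (le_of_lt hneg)),
        if_pos hneg]
      push_cast
      ring
    · rw [if_pos hpos, if_pos hpos, if_neg (not_lt.mpr (le_of_lt hpos))]
      push_cast
      ring

/-- For an `N×N` complex matrix `L` with no eigenvalues on the imaginary
axis, half the signature equals
`∫ (1/(2π(1+s²))) Tr((1 + i s L)(L + i s·1)⁻¹) ds`, the integral being absolutely
convergent (i.e. the integrand is Bochner integrable). -/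
theorem half_signature_eq_trace_integral {N : ℕ} (L : Matrix (Fin N) (Fin N) ℂ)
    (hgap : ∀ z ∈ (Matrix.charpoly L).roots, z.re ≠ 0) :
    Integrable (fun s : ℝ =>
        (1 / (2 * (Real.pi : ℂ) * (1 + (s : ℂ) ^ 2))) *
          Matrix.trace ((1 + ((s : ℂ) * Complex.I) • L) *
            (L + ((s : ℂ) * Complex.I) • 1)⁻¹)) ∧
    (((posEigMult L : ℤ) - (negEigMult L : ℤ) : ℤ) : ℂ) / 2 =
      ∫ s : ℝ,
        (1 / (2 * (Real.pi : ℂ) * (1 + (s : ℂ) ^ 2))) *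
          Matrix.trace ((1 + ((s : ℂ) * Complex.I) • L) *
            (L + ((s : ℂ) * Complex.I) • 1)⁻¹) := by
  have hmem : ∀ l ∈ (Matrix.charpoly L).roots, l.re ≠ 0 := hgap
  have key : ∀ s : ℝ,
      (1 / (2 * (Real.pi : ℂ) * (1 + (s : ℂ) ^ 2))) *
        Matrix.trace ((1 + ((s : ℂ) * Complex.I) • L) *
          (L + ((s : ℂ) * Complex.I) • 1)⁻¹)
      = ((Matrix.charpoly L).roots.map (fun l => gfun l s)).sum := by
    intro s
    rw [trace_formula L ((s : ℂ) * Complex.I)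
      (fun l hl => den2_ne (hmem l hl) s), ← Multiset.sum_map_mul_left]
    rfl
  have hintg : ∀ l ∈ (Matrix.charpoly L).roots, Integrable (gfun l) :=
    fun l hl => gfun_integrable (hmem l hl)
  obtain ⟨hint, hval⟩ := multiset_integrable_sum (Matrix.charpoly L).roots gfun hintg
  constructor
  · exact hint.congr (Filter.Eventually.of_forall fun s => (key s).symm)
  · rw [integral_congr_ae (Filter.Eventually.of_forall key), hval,
      Multiset.map_congr rfl (fun l hl => gfun_integral (hmem l hl) (hintg l hl)),
      count_sum _ hmem]
    rfl
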